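/- For a forest T_v rooted at a hypernode v, let ℒ_i(v) be the collection of all possible hypernodes x_i that can be chosen by the SEI selection process at level i of the tree (level 0 being the root hypernode v, so x_0 = v). Assuming all relevant subtree costs are positive, CV²(|v|·C_SEI(T_v)) ≤ ∏_{i=0}^{n−1} max over x_i ∈ ℒ_i and x_{i+1} ∈ H(x_i) of α(x_i, x_{i+1}), minus 1, where α(x_i, x_{i+1}) = [ r(S(x_i)) / r(x_{i+1}) ] · [ Cost(T_{x_{i+1}}) / Cost(T_{S(x_i)}) ]. (Paper's Corollary 2.) -/

import Mathlib

open Finset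

/-- A finite rooted tree on a finite node type `V`.  The root is its own parent,
every non-root node has a parent whose depth is one smaller, and the root is the
unique node of depth `0`. -/
structure FinRootedTree (V : Type) [Fintype V] [DecidableEq V] where
  root : V
  parent : V → V
  depth : V → ℕ
  depth_root : depth root = 0
  parent_root : parent root = root
  depth_parent : ∀ v, v ≠ root → depth (parent v) + 1 = depth v
  eq_root_of_depth_zero : ∀ v, depth v = 0 → v = root

namespace FinRootedTree

variable {V : Type} [Fintype V] [DecidableEq V]

/-- The set of children of a node. -/
def children (T : FinRootedTree V) (x : V) : Finset V :=
  Finset.univ.filter fun w => w ≠ T.root ∧ T.parent w = x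

/-- `S(v)`: the set of all children of nodes of a hypernode `v`. -/
def succs (T : FinRootedTree V) (v : Finset V) : Finset V :=
  v.biUnion T.children

/-- The set of nodes of the subtree rooted at `x` (the descendants of `x`,
including `x` itself). -/
def desc (T : FinRootedTree V) (x : V) : Finset V :=
  Finset.univ.filter fun w =>
    x ∈ (Finset.range (T.depth w + 1)).image fun k => T.parent^[k] w

/-- `Cost(T_x)`: the total cost of the subtree rooted at `x`. -/
noncomputable def subtreeCost (T : FinRootedTree V) (c : V → ℝ) (x : V) : ℝ :=
  ∑ w ∈ T.desc x, c w

/-- `Cost(T_v)`: the total cost of the forest rooted at the hypernode `v`. -/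
noncomputable def forestCost (T : FinRootedTree V) (c : V → ℝ) (v : Finset V) : ℝ :=
  ∑ x ∈ v, T.subtreeCost c x

/-- `H(v)`: the hyperchildren of `v` for budget `B`, i.e. the subsets of `S(v)`
of size `min B |S(v)|`. -/
def hyper (T : FinRootedTree V) (B : ℕ) (v : Finset V) : Finset (Finset V) :=
  (T.succs v).powersetCard (min B (T.succs v).card)

/-- A hypernode: a nonempty set of distinct nodes, all at the same depth. -/
def IsHypernode (T : FinRootedTree V) (v : Finset V) : Prop :=
  v.Nonempty ∧ ∀ a ∈ v, ∀ b ∈ v, T.depth a = T.depth b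

/-- Expectation functional of the SEI estimator `C_SEI(T_v)` (with importance
function `r`): `seiE T c B r fuel v g` is `E[g(C_SEI(T_v))]`, defined by the
recursion of Algorithm 2, where the hypernode `w` is drawn from `H(v)` with
probability `r(w) / (r(S(v)) * C(|S(v)|-1, |w|-1))`, with enough fuel to reach
the leaves. -/
noncomputable def seiE (T : FinRootedTree V) (c : V → ℝ) (B : ℕ)
    (r : V → ℝ) : ℕ → Finset V → (ℝ → ℝ) → ℝ
  | 0, v, g => g ((∑ x ∈ v, c x) / (v.card : ℝ))
  | fuel + 1, v, g =>
      if T.succs v = ∅ then g ((∑ x ∈ v, c x) / (v.card : ℝ))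
      else
        ∑ w ∈ T.hyper B v,
          ((∑ a ∈ w, r a) /
              ((∑ a ∈ T.succs v, r a) *
                ((((T.succs v).card - 1).choose (w.card - 1) : ℕ) : ℝ))) *
            seiE T c B r fuel w fun y =>
              g ((∑ x ∈ v, c x) / (v.card : ℝ) +
                ((w.card : ℝ) / (v.card : ℝ)) *
                  ((∑ a ∈ T.succs v, r a) / (∑ a ∈ w, r a)) * y)

/-- `Var(|v| * C_SEI(T_v))`. -/
noncomputable def seiVar (T : FinRootedTree V) (c : V → ℝ) (B : ℕ) (r : V → ℝ)
    (fuel : ℕ) (v : Finset V) : ℝ :=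
  seiE T c B r fuel v (fun y => ((v.card : ℝ) * y) ^ 2) -
    (seiE T c B r fuel v fun y => (v.card : ℝ) * y) ^ 2

/-- `CV²(|v| * C_SEI(T_v)) = Var(|v| * C_SEI(T_v)) / E[|v| * C_SEI(T_v)]²`. -/
noncomputable def seiCV2 (T : FinRootedTree V) (c : V → ℝ) (B : ℕ) (r : V → ℝ)
    (fuel : ℕ) (v : Finset V) : ℝ :=
  seiVar T c B r fuel v /
    (seiE T c B r fuel v fun y => (v.card : ℝ) * y) ^ 2

/-- The height of the forest `T_v`: the largest depth of a descendant of a node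
of `v`, minus the depth of `v`. -/
def forestHeight (T : FinRootedTree V) (v : Finset V) : ℕ :=
  (v.biUnion T.desc).sup T.depth - v.sup T.depth

/-- `ℒ_i(v)`: the collection of all hypernodes that can be chosen by the SEI
selection process at level `i`, starting from `x_0 = v` at level `0`. -/
def levelSet (T : FinRootedTree V) (B : ℕ) (v : Finset V) : ℕ → Finset (Finset V)
  | 0 => {v}
  | i + 1 =>
      (levelSet T B v i).biUnion fun u =>
        if T.succs u = ∅ then ∅ else T.hyper B u

/-- The pairs `(x_i, x_{i+1})` with `x_i ∈ ℒ_i(v)` non-terminal and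
`x_{i+1} ∈ H(x_i)`. -/
def pairSet (T : FinRootedTree V) (B : ℕ) (v : Finset V) (i : ℕ) :
    Finset (Finset V × Finset V) :=
  ((T.levelSet B v i).filter fun u => T.succs u ≠ ∅).biUnion fun u =>
    (T.hyper B u).image fun w => (u, w)

/-- The one-step factor
`α(x_i, x_{i+1}) = (r(S(x_i))/r(x_{i+1})) * (Cost(T_{x_{i+1}})/Cost(T_{S(x_i)}))`. -/
noncomputable def alpha1 (T : FinRootedTree V) (c r : V → ℝ) (u w : Finset V) : ℝ :=
  ((∑ a ∈ T.succs u, r a) / (∑ a ∈ w, r a)) *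
    (T.forestCost c w / T.forestCost c (T.succs u))

variable {T : FinRootedTree V}

lemma mem_children {x w : V} : w ∈ T.children x ↔ w ≠ T.root ∧ T.parent w = x := by
  simp [children]

lemma depth_of_mem_children {x w : V} (h : w ∈ T.children x) : T.depth w = T.depth x + 1 := by
  rw [mem_children] at h
  rw [← T.depth_parent w h.1, h.2]

lemma depth_parent_iterate {w : V} : ∀ k, k ≤ T.depth w →
    T.depth (T.parent^[k] w) = T.depth w - k := by
  intro k
  induction k with
  | zero => simp
  | succ k ih =>
    intro hk
    have hk' : k ≤ T.depth w := Nat.le_of_succ_le hk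
    have h1 := ih hk'
    have hne : T.parent^[k] w ≠ T.root := by
      intro h
      rw [h, T.depth_root] at h1
      omega
    rw [Function.iterate_succ_apply']
    have := T.depth_parent _ hne
    omega

lemma mem_desc {x w : V} : w ∈ T.desc x ↔ ∃ k, k ≤ T.depth w ∧ T.parent^[k] w = x := by
  simp [desc, Finset.mem_filter, Finset.mem_image, Finset.mem_range, Nat.lt_succ_iff]

lemma self_mem_desc (x : V) : x ∈ T.desc x := mem_desc.mpr ⟨0, Nat.zero_le _, rfl⟩

lemma depth_le_of_mem_desc {x w : V} (h : w ∈ T.desc x) : T.depth x ≤ T.depth w := by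
  obtain ⟨k, hk, hp⟩ := mem_desc.mp h
  have := depth_parent_iterate (T := T) k hk
  rw [hp] at this
  omega

lemma desc_trans {x y z : V} (hyx : y ∈ T.desc x) (hxz : x ∈ T.desc z) : y ∈ T.desc z := by
  obtain ⟨k, hk, hpk⟩ := mem_desc.mp hyx
  obtain ⟨j, hj, hpj⟩ := mem_desc.mp hxz
  refine mem_desc.mpr ⟨j + k, ?_, ?_⟩
  · have := depth_parent_iterate (T := T) (w := y) k hk
    rw [hpk] at this
    omega
  · rw [Function.iterate_add_apply, hpk, hpj]

lemma mem_desc_of_child {x y w : V} (hy : y ∈ T.children x) (hw : w ∈ T.desc y) :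
    w ∈ T.desc x := by
  refine desc_trans hw ?_
  rw [mem_children] at hy
  refine mem_desc.mpr ⟨1, ?_, by simpa using hy.2⟩
  have := T.depth_parent y hy.1
  omega

lemma mem_desc_iff_child {x w : V} :
    w ∈ T.desc x ↔ w = x ∨ ∃ y ∈ T.children x, w ∈ T.desc y := by
  constructor
  · intro h
    obtain ⟨k, hk, hp⟩ := mem_desc.mp h
    match k with
    | 0 => exact Or.inl hp
    | j + 1 =>
      refine Or.inr ⟨T.parent^[j] w, ?_, mem_desc.mpr ⟨j, by omega, rfl⟩⟩
      have hd := depth_parent_iterate (T := T) (w := w) j (by omega)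
      refine mem_children.mpr ⟨?_, ?_⟩
      · intro hroot
        rw [hroot, T.depth_root] at hd
        omega
      · rw [show T.parent (T.parent^[j] w) = T.parent^[j+1] w from (Function.iterate_succ_apply' _ _ _).symm, hp]
  · rintro (rfl | ⟨y, hy, hw⟩)
    · exact self_mem_desc w
    · exact mem_desc_of_child hy hw

lemma desc_disjoint {y y' : V} (hd : T.depth y = T.depth y') (hne : y ≠ y') :
    Disjoint (T.desc y) (T.desc y') := by
  rw [Finset.disjoint_left]
  intro w hw hw'
  obtain ⟨k, hk, hp⟩ := mem_desc.mp hw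
  obtain ⟨j, hj, hp'⟩ := mem_desc.mp hw'
  have h1 := depth_parent_iterate (T := T) (w := w) k hk
  have h2 := depth_parent_iterate (T := T) (w := w) j hj
  rw [hp] at h1; rw [hp'] at h2
  have : k = j := by omega
  exact hne (by rw [← hp, ← hp', this])

lemma not_mem_desc_child {x y : V} (hy : y ∈ T.children x) : x ∉ T.desc y := by
  intro h
  have h1 := depth_le_of_mem_desc h
  have h2 := depth_of_mem_children hy
  omega

lemma children_disjoint {x x' : V} (hne : x ≠ x') :
    Disjoint (T.children x) (T.children x') := by
  rw [Finset.disjoint_left]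
  intro w hw hw'
  rw [mem_children] at hw hw'
  exact hne (hw.2 ▸ hw'.2)

lemma depth_lt_card (x : V) : T.depth x < Fintype.card V := by
  have hinj : Set.InjOn (fun k => T.parent^[k] x) (Finset.range (T.depth x + 1)) := by
    intro a ha b hb hab
    simp only [Finset.coe_range, Set.mem_Iio] at ha hb
    have h1 := depth_parent_iterate (T := T) (w := x) a (by omega)
    have h2 := depth_parent_iterate (T := T) (w := x) b (by omega)
    simp only at hab
    rw [hab] at h1
    omega
  have h := Finset.card_le_card_of_injOn (t := Finset.univ) (fun k => T.parent^[k] x)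
    (fun _ _ => Finset.mem_univ _) hinj
  simp only [Finset.card_range, Finset.card_univ] at h
  omega
set_option linter.unusedSectionVars false

lemma desc_eq_insert (x : V) :
    T.desc x = insert x ((T.children x).biUnion fun y => T.desc y) := by
  ext w
  simp only [Finset.mem_insert, Finset.mem_biUnion]
  exact mem_desc_iff_child

lemma subtreeCost_eq (c : V → ℝ) (x : V) :
    T.subtreeCost c x = c x + ∑ y ∈ T.children x, T.subtreeCost c y := by
  rw [subtreeCost, desc_eq_insert, Finset.sum_insert, Finset.sum_biUnion]
  · rfl
  · intro y hy y' hy' hne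
    exact desc_disjoint (by rw [depth_of_mem_children hy, depth_of_mem_children hy'])
      hne
  · simp only [Finset.mem_biUnion, not_exists]
    intro y hy
    exact not_mem_desc_child hy.1 hy.2

lemma forestCost_eq (c : V → ℝ) (u : Finset V) :
    T.forestCost c u = (∑ x ∈ u, c x) + T.forestCost c (T.succs u) := by
  have h1 : T.forestCost c (T.succs u) = ∑ x ∈ u, ∑ y ∈ T.children x, T.subtreeCost c y := by
    rw [forestCost, succs, Finset.sum_biUnion]
    intro a _ b _ hab
    exact children_disjoint hab
  rw [h1, forestCost, ← Finset.sum_add_distrib]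
  exact Finset.sum_congr rfl fun x _ => subtreeCost_eq c x

lemma card_filter_mem_powersetCard {s : Finset V} {k : ℕ} (hk : 1 ≤ k) {a : V} (ha : a ∈ s) :
    ((s.powersetCard k).filter fun w => a ∈ w).card = (s.card - 1).choose (k - 1) := by
  rw [← Finset.card_erase_of_mem ha, ← Finset.card_powersetCard (k - 1) (s.erase a)]
  refine Finset.card_bij' (fun w _ => w.erase a) (fun t _ => insert a t) ?_ ?_ ?_ ?_
  · intro w hw
    simp only [Finset.mem_filter, Finset.mem_powersetCard] at hw
    refine Finset.mem_powersetCard.mpr ⟨Finset.erase_subset_erase a hw.1.1, ?_⟩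
    rw [Finset.card_erase_of_mem hw.2, hw.1.2]
  · intro t ht
    rw [Finset.mem_powersetCard] at ht
    have hat : a ∉ t := fun h => (Finset.mem_erase.mp (ht.1 h)).1 rfl
    refine Finset.mem_filter.mpr ⟨Finset.mem_powersetCard.mpr ⟨?_, ?_⟩, Finset.mem_insert_self a t⟩
    · exact Finset.insert_subset ha (ht.1.trans (Finset.erase_subset a s))
    · rw [Finset.card_insert_of_notMem hat, ht.2]
      omega
  · intro w hw
    simp only [Finset.mem_filter] at hw
    exact Finset.insert_erase hw.2
  · intro t ht
    rw [Finset.mem_powersetCard] at ht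
    exact Finset.erase_insert fun h => (Finset.mem_erase.mp (ht.1 h)).1 rfl

lemma sum_powersetCard_sum (s : Finset V) {k : ℕ} (hk : 1 ≤ k) (f : V → ℝ) :
    ∑ w ∈ s.powersetCard k, ∑ a ∈ w, f a
      = (((s.card - 1).choose (k - 1) : ℕ) : ℝ) * ∑ a ∈ s, f a := by
  have h1 : ∀ w ∈ s.powersetCard k, ∑ a ∈ w, f a = ∑ a ∈ s, if a ∈ w then f a else 0 := by
    intro w hw
    rw [Finset.sum_ite_mem, Finset.inter_eq_right.mpr (Finset.mem_powersetCard.mp hw).1]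
  rw [Finset.sum_congr rfl h1, Finset.sum_comm]
  rw [Finset.mul_sum]
  refine Finset.sum_congr rfl fun a ha => ?_
  rw [← Finset.sum_filter, Finset.sum_const, card_filter_mem_powersetCard hk ha,
    nsmul_eq_mul]
/-- The selection probability of `w` from `H(u)`. -/
noncomputable def pw (T : FinRootedTree V) (B : ℕ) (r : V → ℝ) (u w : Finset V) : ℝ :=
  (∑ a ∈ w, r a) /
    ((∑ a ∈ T.succs u, r a) * ((((T.succs u).card - 1).choose (w.card - 1) : ℕ) : ℝ))

lemma seiE_succ_eq {c r : V → ℝ} {B fuel : ℕ} {u : Finset V} (hs : T.succs u ≠ ∅)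
    (g : ℝ → ℝ) :
    seiE T c B r (fuel + 1) u g =
      ∑ w ∈ T.hyper B u, pw T B r u w *
        seiE T c B r fuel w fun y =>
          g ((∑ x ∈ u, c x) / (u.card : ℝ) +
            ((w.card : ℝ) / (u.card : ℝ)) *
              ((∑ a ∈ T.succs u, r a) / (∑ a ∈ w, r a)) * y) := by
  rw [seiE, if_neg hs]
  rfl

lemma mem_hyper {B : ℕ} {u w : Finset V} :
    w ∈ T.hyper B u ↔ w ⊆ T.succs u ∧ w.card = min B (T.succs u).card :=
  Finset.mem_powersetCard

lemma one_le_min_card {B : ℕ} (hB : 1 ≤ B) {u : Finset V} (hs : T.succs u ≠ ∅) :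
    1 ≤ min B (T.succs u).card := by
  have : 0 < (T.succs u).card := Finset.card_pos.mpr (Finset.nonempty_iff_ne_empty.mpr hs)
  omega

lemma hyper_nonempty_mem {B : ℕ} (hB : 1 ≤ B) {u w : Finset V} (hs : T.succs u ≠ ∅)
    (hw : w ∈ T.hyper B u) : w.Nonempty := by
  rw [← Finset.card_pos, (mem_hyper.mp hw).2]
  have := one_le_min_card hB hs
  omega

lemma choose_cast_pos {B : ℕ} (hB : 1 ≤ B) {u w : Finset V} (hs : T.succs u ≠ ∅)
    (hw : w ∈ T.hyper B u) :
    (0 : ℝ) < ((((T.succs u).card - 1).choose (w.card - 1) : ℕ) : ℝ) := by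
  have h1 := one_le_min_card hB hs
  have h2 := (mem_hyper.mp hw).2
  have h3 : w.card - 1 ≤ (T.succs u).card - 1 := by omega
  exact_mod_cast Nat.choose_pos h3

lemma sum_r_pos {r : V → ℝ} (hr : ∀ x, 0 < r x) {s : Finset V} (hs : s.Nonempty) :
    0 < ∑ a ∈ s, r a :=
  Finset.sum_pos (fun a _ => hr a) hs

lemma pw_pos {B : ℕ} {r : V → ℝ} (hr : ∀ x, 0 < r x) (hB : 1 ≤ B) {u w : Finset V}
    (hs : T.succs u ≠ ∅) (hw : w ∈ T.hyper B u) : 0 < pw T B r u w := by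
  have h1 : (0:ℝ) < ∑ a ∈ w, r a := sum_r_pos hr (hyper_nonempty_mem hB hs hw)
  have h2 : (0:ℝ) < ∑ a ∈ T.succs u, r a :=
    sum_r_pos hr (Finset.nonempty_iff_ne_empty.mpr hs)
  exact div_pos h1 (mul_pos h2 (choose_cast_pos hB hs hw))

lemma prob_sum {B : ℕ} {r : V → ℝ} (hr : ∀ x, 0 < r x) (hB : 1 ≤ B) {u : Finset V}
    (hs : T.succs u ≠ ∅) :
    ∑ w ∈ T.hyper B u, pw T B r u w = 1 := by
  have hk1 := one_le_min_card (T := T) hB hs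
  have hrS : (0:ℝ) < ∑ a ∈ T.succs u, r a :=
    sum_r_pos hr (Finset.nonempty_iff_ne_empty.mpr hs)
  have hC : (0:ℝ) < ((((T.succs u).card - 1).choose (min B (T.succs u).card - 1) : ℕ) : ℝ) := by
    have h3 : min B (T.succs u).card - 1 ≤ (T.succs u).card - 1 := by omega
    exact_mod_cast Nat.choose_pos h3
  have h1 : ∀ w ∈ T.hyper B u, pw T B r u w =
      (∑ a ∈ w, r a) * (1 / ((∑ a ∈ T.succs u, r a) *
        ((((T.succs u).card - 1).choose (min B (T.succs u).card - 1) : ℕ) : ℝ))) := by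
    intro w hw
    rw [pw, (mem_hyper.mp hw).2]
    ring
  rw [Finset.sum_congr rfl h1, ← Finset.sum_mul,
    show T.hyper B u = (T.succs u).powersetCard (min B (T.succs u).card) from rfl,
    sum_powersetCard_sum (T.succs u) hk1 r]
  field_simp

lemma sum_hyper_forestCost {B : ℕ} (hB : 1 ≤ B) (c : V → ℝ) {u : Finset V}
    (hs : T.succs u ≠ ∅) :
    ∑ w ∈ T.hyper B u, T.forestCost c w =
      (((((T.succs u).card - 1).choose (min B (T.succs u).card - 1) : ℕ)) : ℝ) *
        T.forestCost c (T.succs u) :=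
  sum_powersetCard_sum (T.succs u) (one_le_min_card (T := T) hB hs) (T.subtreeCost c)

lemma seiE_quad {B : ℕ} {r : V → ℝ} (hr : ∀ x, 0 < r x) (hB : 1 ≤ B) (c : V → ℝ) :
    ∀ (fuel : ℕ) (u : Finset V) (a p q : ℝ),
      seiE T c B r fuel u (fun y => a * y ^ 2 + p * y + q)
        = a * seiE T c B r fuel u (fun y => y ^ 2)
          + p * seiE T c B r fuel u (fun y => y) + q := by
  intro fuel
  induction fuel with
  | zero => intro u a p q; simp only [seiE]
  | succ fuel ih =>
    intro u a p q
    by_cases hs : T.succs u = ∅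
    · simp only [seiE, if_pos hs]
    · rw [seiE_succ_eq hs, seiE_succ_eq hs (fun y => y ^ 2), seiE_succ_eq hs (fun y => y)]
      set q0 := (∑ x ∈ u, c x) / (u.card : ℝ) with hq0
      have key : ∀ w ∈ T.hyper B u,
          pw T B r u w * seiE T c B r fuel w (fun y =>
              a * (q0 + ((w.card : ℝ) / (u.card : ℝ)) *
                ((∑ a ∈ T.succs u, r a) / (∑ a ∈ w, r a)) * y) ^ 2 +
              p * (q0 + ((w.card : ℝ) / (u.card : ℝ)) *
                ((∑ a ∈ T.succs u, r a) / (∑ a ∈ w, r a)) * y) + q)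
            = a * (pw T B r u w * seiE T c B r fuel w (fun y =>
                (q0 + ((w.card : ℝ) / (u.card : ℝ)) *
                  ((∑ a ∈ T.succs u, r a) / (∑ a ∈ w, r a)) * y) ^ 2))
              + p * (pw T B r u w * seiE T c B r fuel w (fun y =>
                q0 + ((w.card : ℝ) / (u.card : ℝ)) *
                  ((∑ a ∈ T.succs u, r a) / (∑ a ∈ w, r a)) * y))
              + pw T B r u w * q := by
        intro w hw
        set β := ((w.card : ℝ) / (u.card : ℝ)) *
          ((∑ a ∈ T.succs u, r a) / (∑ a ∈ w, r a)) with hβ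
        have e1 : (fun y => a * (q0 + β * y) ^ 2 + p * (q0 + β * y) + q)
            = fun y => (a * β ^ 2) * y ^ 2 + (2 * a * β * q0 + p * β) * y
                + (a * q0 ^ 2 + p * q0 + q) := by
          funext y; ring
        have e2 : (fun y => (q0 + β * y) ^ 2)
            = fun y => (β ^ 2) * y ^ 2 + (2 * β * q0) * y + q0 ^ 2 := by
          funext y; ring
        have e3 : (fun y => q0 + β * y)
            = fun y => (0:ℝ) * y ^ 2 + β * y + q0 := by
          funext y; ring
        rw [e1, e2, e3, ih, ih, ih]
        ring
      rw [Finset.sum_congr rfl key]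
      rw [Finset.sum_add_distrib, Finset.sum_add_distrib, ← Finset.mul_sum, ← Finset.mul_sum,
        ← Finset.sum_mul, prob_sum hr hB hs, one_mul]
lemma mem_levelSet_succ {B i : ℕ} {v u : Finset V} :
    u ∈ T.levelSet B v (i + 1) ↔
      ∃ u' ∈ T.levelSet B v i, T.succs u' ≠ ∅ ∧ u ∈ T.hyper B u' := by
  rw [levelSet, Finset.mem_biUnion]
  constructor
  · rintro ⟨u', hu', hmem⟩
    by_cases h : T.succs u' = ∅
    · rw [if_pos h] at hmem; exact absurd hmem (Finset.notMem_empty u)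
    · rw [if_neg h] at hmem; exact ⟨u', hu', h, hmem⟩
  · rintro ⟨u', hu', h, hmem⟩
    exact ⟨u', hu', by rwa [if_neg h]⟩

lemma levelSet_spec {B : ℕ} (hB : 1 ≤ B) {v : Finset V} (hv : T.IsHypernode v) :
    ∀ (i : ℕ) (u : Finset V), u ∈ T.levelSet B v i →
      u.Nonempty ∧ (∀ x ∈ u, ∀ z ∈ v, T.depth x = T.depth z + i) ∧
        ∀ x ∈ u, ∃ z ∈ v, x ∈ T.desc z := by
  intro i
  induction i with
  | zero =>
    intro u hu
    rw [levelSet, Finset.mem_singleton] at hu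
    subst hu
    exact ⟨hv.1, fun x hx z hz => by rw [Nat.add_zero]; exact hv.2 x hx z hz,
      fun x hx => ⟨x, hx, self_mem_desc x⟩⟩
  | succ i ih =>
    intro u hu
    obtain ⟨u', hu', hsne, hmem⟩ := mem_levelSet_succ.mp hu
    obtain ⟨hne', hdep', hdesc'⟩ := ih u' hu'
    have hsub : u ⊆ T.succs u' := (mem_hyper.mp hmem).1
    have hchild : ∀ x ∈ u, ∃ x' ∈ u', x ∈ T.children x' := by
      intro x hx
      exact Finset.mem_biUnion.mp (hsub hx)
    refine ⟨hyper_nonempty_mem hB hsne hmem, ?_, ?_⟩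
    · intro x hx z hz
      obtain ⟨x', hx', hc⟩ := hchild x hx
      rw [depth_of_mem_children hc, hdep' x' hx' z hz]
      omega
    · intro x hx
      obtain ⟨x', hx', hc⟩ := hchild x hx
      obtain ⟨z, hz, hd⟩ := hdesc' x' hx'
      exact ⟨z, hz, desc_trans (mem_desc_of_child hc (self_mem_desc x)) hd⟩

lemma sup_depth_const {u : Finset V} (hu : u.Nonempty) {d : ℕ}
    (h : ∀ x ∈ u, T.depth x = d) : u.sup T.depth = d := by
  obtain ⟨x, hx⟩ := hu
  refine le_antisymm (Finset.sup_le fun y hy => (h y hy).le) ?_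
  rw [← h x hx]
  exact Finset.le_sup hx

lemma sup_desc_ge {u : Finset V} {y : V} (hy : y ∈ u.biUnion T.desc) :
    T.depth y ≤ (u.biUnion T.desc).sup T.depth :=
  Finset.le_sup hy

lemma one_le_forestHeight {u : Finset V} (hu : u.Nonempty) {d : ℕ}
    (hd : ∀ x ∈ u, T.depth x = d) (hs : T.succs u ≠ ∅) :
    1 ≤ T.forestHeight u := by
  obtain ⟨y, hy⟩ := Finset.nonempty_iff_ne_empty.mpr hs
  obtain ⟨x, hx, hc⟩ := Finset.mem_biUnion.mp hy
  have h1 : y ∈ u.biUnion T.desc :=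
    Finset.mem_biUnion.mpr ⟨x, hx, mem_desc_of_child hc (self_mem_desc y)⟩
  have h2 : T.depth y = d + 1 := by rw [depth_of_mem_children hc, hd x hx]
  have h3 := sup_desc_ge (T := T) h1
  rw [forestHeight, sup_depth_const hu hd]
  omega

lemma forestHeight_step {B : ℕ} (hB : 1 ≤ B) {u w : Finset V} (hu : u.Nonempty) {d : ℕ}
    (hd : ∀ x ∈ u, T.depth x = d) (hs : T.succs u ≠ ∅) (hw : w ∈ T.hyper B u) :
    T.forestHeight w + 1 ≤ T.forestHeight u := by
  have hwne := hyper_nonempty_mem hB hs hw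
  have hsub : w ⊆ T.succs u := (mem_hyper.mp hw).1
  have hdw : ∀ x ∈ w, T.depth x = d + 1 := by
    intro x hx
    obtain ⟨x', hx', hc⟩ := Finset.mem_biUnion.mp (hsub hx)
    rw [depth_of_mem_children hc, hd x' hx']
  have hdescsub : w.biUnion T.desc ⊆ u.biUnion T.desc := by
    intro y hy
    obtain ⟨x, hx, hdx⟩ := Finset.mem_biUnion.mp hy
    obtain ⟨x', hx', hc⟩ := Finset.mem_biUnion.mp (hsub hx)
    exact Finset.mem_biUnion.mpr ⟨x', hx', desc_trans hdx
      (mem_desc_of_child hc (self_mem_desc x))⟩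
  have hsup : (w.biUnion T.desc).sup T.depth ≤ (u.biUnion T.desc).sup T.depth :=
    Finset.sup_mono hdescsub
  obtain ⟨x, hx⟩ := id hwne
  have hin : x ∈ w.biUnion T.desc := Finset.mem_biUnion.mpr ⟨x, hx, self_mem_desc x⟩
  have hgew := sup_desc_ge (T := T) hin
  rw [hdw x hx] at hgew
  rw [forestHeight, forestHeight, sup_depth_const hu hd, sup_depth_const hwne hdw]
  omega

lemma succs_eq_empty_of_height_zero {u : Finset V} (hu : u.Nonempty) {d : ℕ}
    (hd : ∀ x ∈ u, T.depth x = d) (hh : T.forestHeight u = 0) : T.succs u = ∅ := by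
  by_contra hs
  have := one_le_forestHeight hu hd hs
  omega

lemma forestHeight_le_card (u : Finset V) : T.forestHeight u ≤ Fintype.card V := by
  rw [forestHeight]
  have h1 : (u.biUnion T.desc).sup T.depth ≤ Fintype.card V :=
    Finset.sup_le fun y _ => (depth_lt_card y).le
  omega
lemma forestCost_pos {c : V → ℝ} (hpos : ∀ x, 0 < T.subtreeCost c x) {u : Finset V}
    (hu : u.Nonempty) : 0 < T.forestCost c u :=
  Finset.sum_pos (fun x _ => hpos x) hu

set_option maxHeartbeats 2000000 in
lemma sei_main {B : ℕ} {c r : V → ℝ} (hc : ∀ x, 0 ≤ c x)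
    (hpos : ∀ x, 0 < T.subtreeCost c x) (hB : 1 ≤ B) (hr : ∀ x, 0 < r x)
    {v : Finset V} (hv : T.IsHypernode v) (Pi : ℕ → ℝ)
    (hPi1 : ∀ i, 1 ≤ Pi i)
    (hPi2 : ∀ (i : ℕ) (u w : Finset V), u ∈ T.levelSet B v i → T.succs u ≠ ∅ →
        w ∈ T.hyper B u → alpha1 T c r u w * Pi (i + 1) ≤ Pi i) :
    ∀ (fuel i : ℕ) (u : Finset V), u ∈ T.levelSet B v i → T.forestHeight u ≤ fuel →
      seiE T c B r fuel u (fun y => y) = T.forestCost c u / (u.card : ℝ) ∧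
      seiE T c B r fuel u (fun y => y ^ 2) ≤
        Pi i * (T.forestCost c u / (u.card : ℝ)) ^ 2 := by
  intro fuel
  induction fuel with
  | zero =>
    intro i u hu hh
    obtain ⟨hune, hdep, -⟩ := levelSet_spec hB hv i u hu
    obtain ⟨z0, hz0⟩ := hv.1
    have hs : T.succs u = ∅ :=
      succs_eq_empty_of_height_zero hune (fun x hx => hdep x hx z0 hz0) (by omega)
    have hcost : T.forestCost c u = ∑ x ∈ u, c x := by
      rw [forestCost_eq, hs]
      simp [forestCost]
    constructor
    · simp only [seiE]
      rw [hcost]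
    · simp only [seiE]
      rw [hcost]
      exact le_mul_of_one_le_left (sq_nonneg _) (hPi1 i)
  | succ fuel ih =>
    intro i u hu hh
    obtain ⟨hune, hdep, -⟩ := levelSet_spec hB hv i u hu
    obtain ⟨z0, hz0⟩ := hv.1
    have hdep' : ∀ x ∈ u, T.depth x = T.depth z0 + i := fun x hx => hdep x hx z0 hz0
    by_cases hs : T.succs u = ∅
    · have hcost : T.forestCost c u = ∑ x ∈ u, c x := by
        rw [forestCost_eq, hs]
        simp [forestCost]
      constructor
      · simp only [seiE, if_pos hs]
        rw [hcost]
      · simp only [seiE, if_pos hs]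
        rw [hcost]
        exact le_mul_of_one_le_left (sq_nonneg _) (hPi1 i)
    · -- main case
      have hSne : (T.succs u).Nonempty := Finset.nonempty_iff_ne_empty.mpr hs
      have hm : (0:ℝ) < (u.card : ℝ) := by exact_mod_cast Finset.card_pos.mpr hune
      have hrS : (0:ℝ) < ∑ a ∈ T.succs u, r a := sum_r_pos hr hSne
      have hk1 : 1 ≤ min B (T.succs u).card := one_le_min_card hB hs
      have hkR : (0:ℝ) < ((min B (T.succs u).card : ℕ) : ℝ) := by exact_mod_cast hk1
      have hCpos : (0:ℝ) <
          ((((T.succs u).card - 1).choose (min B (T.succs u).card - 1) : ℕ) : ℝ) := by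
        have h3 : min B (T.succs u).card - 1 ≤ (T.succs u).card - 1 := by omega
        exact_mod_cast Nat.choose_pos h3
      have hCostS : (0:ℝ) < T.forestCost c (T.succs u) := forestCost_pos hpos hSne
      have hcu : (0:ℝ) ≤ ∑ x ∈ u, c x := Finset.sum_nonneg fun x _ => hc x
      have hCostu : T.forestCost c u = (∑ x ∈ u, c x) + T.forestCost c (T.succs u) :=
        forestCost_eq c u
      have hwlev : ∀ w ∈ T.hyper B u, w ∈ T.levelSet B v (i + 1) := fun w hw =>
        mem_levelSet_succ.mpr ⟨u, hu, hs, hw⟩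
      have hwh : ∀ w ∈ T.hyper B u, T.forestHeight w ≤ fuel := by
        intro w hw
        have := forestHeight_step hB hune hdep' hs hw
        omega
      have hwcard : ∀ w ∈ T.hyper B u, w.card = min B (T.succs u).card := fun w hw =>
        (mem_hyper.mp hw).2
      have hwne : ∀ w ∈ T.hyper B u, w.Nonempty := fun w hw => hyper_nonempty_mem hB hs hw
      have hwcost : ∀ w ∈ T.hyper B u, 0 < T.forestCost c w := fun w hw =>
        forestCost_pos hpos (hwne w hw)
      have hrw : ∀ w ∈ T.hyper B u, (0:ℝ) < ∑ a ∈ w, r a := fun w hw =>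
        sum_r_pos hr (hwne w hw)
      have hmne : (u.card : ℝ) ≠ 0 := hm.ne'
      have hrSne : (∑ a ∈ T.succs u, r a) ≠ 0 := hrS.ne'
      have hkRne : ((min B (T.succs u).card : ℕ) : ℝ) ≠ 0 := hkR.ne'
      have hCne : ((((T.succs u).card - 1).choose (min B (T.succs u).card - 1) : ℕ) : ℝ) ≠ 0 :=
        hCpos.ne'
      constructor
      · -- mean
        rw [seiE_succ_eq hs]
        have key : ∀ w ∈ T.hyper B u,
            pw T B r u w * seiE T c B r fuel w (fun y =>
              (∑ x ∈ u, c x) / (u.card : ℝ) + ((w.card : ℝ) / (u.card : ℝ)) *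
                ((∑ a ∈ T.succs u, r a) / (∑ a ∈ w, r a)) * y)
            = T.forestCost c w /
                (((((T.succs u).card - 1).choose (min B (T.succs u).card - 1) : ℕ) : ℝ) *
                  (u.card : ℝ))
              + pw T B r u w * ((∑ x ∈ u, c x) / (u.card : ℝ)) := by
          intro w hw
          have e3 : (fun y => (∑ x ∈ u, c x) / (u.card : ℝ) + ((w.card : ℝ) / (u.card : ℝ)) *
                ((∑ a ∈ T.succs u, r a) / (∑ a ∈ w, r a)) * y)
              = fun y => (0:ℝ) * y ^ 2 + (((w.card : ℝ) / (u.card : ℝ)) *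
                ((∑ a ∈ T.succs u, r a) / (∑ a ∈ w, r a))) * y
                  + (∑ x ∈ u, c x) / (u.card : ℝ) := by
            funext y; ring
          rw [e3, seiE_quad hr hB, (ih (i + 1) w (hwlev w hw) (hwh w hw)).1, pw,
            hwcard w hw]
          have h1 := hrw w hw
          field_simp
          ring
        rw [Finset.sum_congr rfl key, Finset.sum_add_distrib, ← Finset.sum_div,
          sum_hyper_forestCost hB c hs, ← Finset.sum_mul, prob_sum hr hB hs, one_mul,
          hCostu]
        field_simp
        ring
      · -- second moment
        rw [seiE_succ_eq hs]
        have key2 : ∀ w ∈ T.hyper B u,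
            pw T B r u w * seiE T c B r fuel w (fun y =>
              ((∑ x ∈ u, c x) / (u.card : ℝ) + ((w.card : ℝ) / (u.card : ℝ)) *
                ((∑ a ∈ T.succs u, r a) / (∑ a ∈ w, r a)) * y) ^ 2)
            ≤ (Pi i * T.forestCost c (T.succs u) /
                  (((((T.succs u).card - 1).choose (min B (T.succs u).card - 1) : ℕ) : ℝ) *
                    (u.card : ℝ) ^ 2)) * T.forestCost c w
              + (2 * ((∑ x ∈ u, c x) / (u.card : ℝ)) /
                  (((((T.succs u).card - 1).choose (min B (T.succs u).card - 1) : ℕ) : ℝ) *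
                    (u.card : ℝ))) * T.forestCost c w
              + pw T B r u w * (((∑ x ∈ u, c x) / (u.card : ℝ)) ^ 2) := by
          intro w hw
          set β : ℝ := ((w.card : ℝ) / (u.card : ℝ)) *
            ((∑ a ∈ T.succs u, r a) / (∑ a ∈ w, r a)) with hβ
          set q0 : ℝ := (∑ x ∈ u, c x) / (u.card : ℝ) with hq0def
          have e2 : (fun y => (q0 + β * y) ^ 2)
              = fun y => (β ^ 2) * y ^ 2 + (2 * β * q0) * y + q0 ^ 2 := by
            funext y; ring
          rw [e2, seiE_quad hr hB, (ih (i + 1) w (hwlev w hw) (hwh w hw)).1]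
          have hM2 := (ih (i + 1) w (hwlev w hw) (hwh w hw)).2
          have h1 := hrw w hw
          have hpw := pw_pos hr hB hs hw
          have hCw := hwcost w hw
          have step1 : pw T B r u w * (β ^ 2 *
                seiE T c B r fuel w (fun y => y ^ 2)
                + 2 * β * q0 * (T.forestCost c w / (w.card : ℝ)) + q0 ^ 2)
              ≤ pw T B r u w * (β ^ 2 *
                (Pi (i + 1) * (T.forestCost c w / (w.card : ℝ)) ^ 2)
                + 2 * β * q0 * (T.forestCost c w / (w.card : ℝ)) + q0 ^ 2) := by
            apply mul_le_mul_of_nonneg_left _ hpw.le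
            refine add_le_add (add_le_add ?_ le_rfl) le_rfl
            exact mul_le_mul_of_nonneg_left hM2 (sq_nonneg β)
          refine step1.trans ?_
          have step2 : pw T B r u w * (β ^ 2 *
                (Pi (i + 1) * (T.forestCost c w / (w.card : ℝ)) ^ 2)
                + 2 * β * q0 * (T.forestCost c w / (w.card : ℝ)) + q0 ^ 2)
              = (Pi (i + 1) * ((∑ a ∈ T.succs u, r a) / (∑ a ∈ w, r a)) *
                  T.forestCost c w) * (T.forestCost c w /
                  (((((T.succs u).card - 1).choose (min B (T.succs u).card - 1) : ℕ) : ℝ) *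
                    (u.card : ℝ) ^ 2))
                + (2 * q0 /
                  (((((T.succs u).card - 1).choose (min B (T.succs u).card - 1) : ℕ) : ℝ) *
                    (u.card : ℝ))) * T.forestCost c w
                + pw T B r u w * q0 ^ 2 := by
            rw [hβ, pw, hwcard w hw]
            field_simp
          rw [step2]
          have halpha : Pi (i + 1) * ((∑ a ∈ T.succs u, r a) / (∑ a ∈ w, r a)) *
              T.forestCost c w ≤ Pi i * T.forestCost c (T.succs u) := by
            have h2 := hPi2 i u w hu hs hw
            rw [alpha1] at h2
            have h3 : alpha1 T c r u w * Pi (i + 1) * T.forestCost c (T.succs u)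
                ≤ Pi i * T.forestCost c (T.succs u) :=
              mul_le_mul_of_nonneg_right (hPi2 i u w hu hs hw) hCostS.le
            rw [alpha1] at h3
            calc Pi (i + 1) * ((∑ a ∈ T.succs u, r a) / (∑ a ∈ w, r a)) *
                T.forestCost c w
                = (∑ a ∈ T.succs u, r a) / (∑ a ∈ w, r a) *
                  (T.forestCost c w / T.forestCost c (T.succs u)) * Pi (i + 1) *
                  T.forestCost c (T.succs u) := by
                  field_simp
              _ ≤ Pi i * T.forestCost c (T.succs u) := h3
          have hnn : (0:ℝ) ≤ T.forestCost c w /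
              (((((T.succs u).card - 1).choose (min B (T.succs u).card - 1) : ℕ) : ℝ) *
                (u.card : ℝ) ^ 2) := by positivity
          have := mul_le_mul_of_nonneg_right halpha hnn
          have hfin : Pi i * T.forestCost c (T.succs u) * (T.forestCost c w /
              (((((T.succs u).card - 1).choose (min B (T.succs u).card - 1) : ℕ) : ℝ) *
                (u.card : ℝ) ^ 2))
              = (Pi i * T.forestCost c (T.succs u) /
                  (((((T.succs u).card - 1).choose (min B (T.succs u).card - 1) : ℕ) : ℝ) *
                    (u.card : ℝ) ^ 2)) * T.forestCost c w := by
            field_simp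
          linarith [mul_le_mul_of_nonneg_right halpha hnn, hfin.le, hfin.ge]
        refine (Finset.sum_le_sum key2).trans ?_
        rw [Finset.sum_add_distrib, Finset.sum_add_distrib, ← Finset.mul_sum,
          ← Finset.mul_sum, ← Finset.sum_mul, sum_hyper_forestCost hB c hs,
          prob_sum hr hB hs, one_mul, hCostu]
        set a : ℝ := T.forestCost c (T.succs u) / (u.card : ℝ) with hadef
        set b : ℝ := (∑ x ∈ u, c x) / (u.card : ℝ) with hbdef
        have ha : 0 ≤ a := by positivity
        have hb : 0 ≤ b := by rw [hbdef]; positivity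
        have lhseq : Pi i * T.forestCost c (T.succs u) /
              (((((T.succs u).card - 1).choose (min B (T.succs u).card - 1) : ℕ) : ℝ) *
                (u.card : ℝ) ^ 2) *
              (((((T.succs u).card - 1).choose (min B (T.succs u).card - 1) : ℕ) : ℝ) *
                T.forestCost c (T.succs u))
              + 2 * b /
                (((((T.succs u).card - 1).choose (min B (T.succs u).card - 1) : ℕ) : ℝ) *
                  (u.card : ℝ)) *
                (((((T.succs u).card - 1).choose (min B (T.succs u).card - 1) : ℕ) : ℝ) *
                  T.forestCost c (T.succs u))
              + b ^ 2
            = Pi i * a ^ 2 + 2 * b * a + b ^ 2 := by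
          rw [hadef]
          field_simp
        rw [lhseq]
        have hrhseq : ((∑ x ∈ u, c x) + T.forestCost c (T.succs u)) / (u.card : ℝ)
            = b + a := by
          rw [hadef, hbdef, add_div]
        rw [hrhseq]
        nlinarith [mul_nonneg (mul_nonneg (sub_nonneg.mpr (hPi1 i)) hb) hb,
          mul_nonneg (mul_nonneg (sub_nonneg.mpr (hPi1 i)) ha) hb]
lemma mem_pairSet {B i : ℕ} {v u w : Finset V} :
    (u, w) ∈ T.pairSet B v i ↔
      u ∈ T.levelSet B v i ∧ T.succs u ≠ ∅ ∧ w ∈ T.hyper B u := by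
  rw [pairSet, Finset.mem_biUnion]
  constructor
  · rintro ⟨u', hu', hmem⟩
    rw [Finset.mem_filter] at hu'
    obtain ⟨w', hw', heq⟩ := Finset.mem_image.mp hmem
    obtain ⟨h1, h2⟩ := Prod.mk.injEq .. ▸ (congrArg id heq)
    cases heq
    exact ⟨hu'.1, hu'.2, hw'⟩
  · rintro ⟨h1, h2, h3⟩
    exact ⟨u, Finset.mem_filter.mpr ⟨h1, h2⟩, Finset.mem_image.mpr ⟨w, h3, rfl⟩⟩

lemma sum_pw_alpha {B : ℕ} {c r : V → ℝ} (hpos : ∀ x, 0 < T.subtreeCost c x)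
    (hr : ∀ x, 0 < r x) (hB : 1 ≤ B) {u : Finset V} (hs : T.succs u ≠ ∅) :
    ∑ w ∈ T.hyper B u, pw T B r u w * alpha1 T c r u w = 1 := by
  have hSne : (T.succs u).Nonempty := Finset.nonempty_iff_ne_empty.mpr hs
  have hrS : (0:ℝ) < ∑ a ∈ T.succs u, r a := sum_r_pos hr hSne
  have hk1 : 1 ≤ min B (T.succs u).card := one_le_min_card hB hs
  have hCpos : (0:ℝ) <
      ((((T.succs u).card - 1).choose (min B (T.succs u).card - 1) : ℕ) : ℝ) := by
    have h3 : min B (T.succs u).card - 1 ≤ (T.succs u).card - 1 := by omega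
    exact_mod_cast Nat.choose_pos h3
  have hCostS : (0:ℝ) < T.forestCost c (T.succs u) := forestCost_pos hpos hSne
  have key : ∀ w ∈ T.hyper B u, pw T B r u w * alpha1 T c r u w
      = T.forestCost c w *
        (1 / (((((T.succs u).card - 1).choose (min B (T.succs u).card - 1) : ℕ) : ℝ) *
          T.forestCost c (T.succs u))) := by
    intro w hw
    have hrw : (0:ℝ) < ∑ a ∈ w, r a := sum_r_pos hr (hyper_nonempty_mem hB hs hw)
    rw [pw, alpha1, (mem_hyper.mp hw).2]
    field_simp
  rw [Finset.sum_congr rfl key, ← Finset.sum_mul, sum_hyper_forestCost hB c hs]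
  field_simp

lemma exists_one_le_alpha {B : ℕ} {c r : V → ℝ} (hpos : ∀ x, 0 < T.subtreeCost c x)
    (hr : ∀ x, 0 < r x) (hB : 1 ≤ B) {u : Finset V} (hs : T.succs u ≠ ∅)
    (hne : (T.hyper B u).Nonempty) :
    ∃ w ∈ T.hyper B u, 1 ≤ alpha1 T c r u w := by
  have h1 : ∑ w ∈ T.hyper B u, pw T B r u w
      ≤ ∑ w ∈ T.hyper B u, pw T B r u w * alpha1 T c r u w := by
    rw [prob_sum hr hB hs, sum_pw_alpha hpos hr hB hs]
  obtain ⟨w, hw, hle⟩ := Finset.exists_le_of_sum_le hne h1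
  refine ⟨w, hw, ?_⟩
  have hpw := pw_pos hr hB hs hw
  nlinarith

lemma lt_forestHeight {B i : ℕ} (hB : 1 ≤ B) {v : Finset V} (hv : T.IsHypernode v)
    {u : Finset V} (hu : u ∈ T.levelSet B v i) (hs : T.succs u ≠ ∅) :
    i < T.forestHeight v := by
  obtain ⟨hune, hdep, hdesc⟩ := levelSet_spec hB hv i u hu
  obtain ⟨y, hy⟩ := Finset.nonempty_iff_ne_empty.mpr hs
  obtain ⟨x, hx, hc⟩ := Finset.mem_biUnion.mp hy
  obtain ⟨z, hz, hdz⟩ := hdesc x hx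
  obtain ⟨z0, hz0⟩ := hv.1
  have hdv : ∀ x' ∈ v, T.depth x' = T.depth z0 := fun x' hx' => hv.2 x' hx' z0 hz0
  have hsupv : v.sup T.depth = T.depth z0 := sup_depth_const hv.1 hdv
  have hyx : y ∈ T.desc z := desc_trans (mem_desc_of_child hc (self_mem_desc y)) hdz
  have hmem : y ∈ v.biUnion T.desc := Finset.mem_biUnion.mpr ⟨z, hz, hyx⟩
  have hge : T.depth y ≤ (v.biUnion T.desc).sup T.depth := Finset.le_sup hmem
  have hdy : T.depth y = T.depth z0 + i + 1 := by
    rw [depth_of_mem_children hc, hdep x hx z0 hz0]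
  rw [forestHeight, hsupv]
  omega

set_option maxHeartbeats 1000000 in
/-- Paper's Corollary 2: `CV²(|v|·C_SEI(T_v)) ≤
∏_{i=0}^{n-1} max_{x_i ∈ ℒ_i(v), x_{i+1} ∈ H(x_i)} α(x_i, x_{i+1}) − 1`,
where `n` is the height of the forest `T_v`. -/
theorem sei_cv2_le_prod_max_alpha (T : FinRootedTree V) (c : V → ℝ)
    (hc : ∀ x, 0 ≤ c x) (hpos : ∀ x : V, 0 < T.subtreeCost c x)
    (B : ℕ) (hB : 1 ≤ B) (r : V → ℝ) (hr : ∀ x : V, 0 < r x)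
    (v : Finset V) (hv : T.IsHypernode v)
    (hne : ∀ i, i < T.forestHeight v → (T.pairSet B v i).Nonempty) :
    seiCV2 T c B r (Fintype.card V) v ≤
      (∏ i ∈ (Finset.range (T.forestHeight v)).attach,
        (T.pairSet B v i.1).sup' (hne i.1 (Finset.mem_range.mp i.2))
          fun p => alpha1 T c r p.1 p.2) - 1 := by
  classical
  set n := T.forestHeight v with hn
  set A : ℕ → ℝ := fun j => if h : j < n then
      (T.pairSet B v j).sup' (hne j h) (fun p => alpha1 T c r p.1 p.2)
    else 1 with hA
  have hA1 : ∀ j, 1 ≤ A j := by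
    intro j
    rw [hA]
    dsimp only
    split_ifs with h
    · obtain ⟨p, hp⟩ := hne j h
      obtain ⟨u, w⟩ := p
      obtain ⟨hu, hsne, hw⟩ := mem_pairSet.mp hp
      obtain ⟨w', hw', h1⟩ := exists_one_le_alpha hpos hr hB hsne ⟨w, hw⟩
      exact h1.trans (by
        simpa using Finset.le_sup' (fun p : Finset V × Finset V => alpha1 T c r p.1 p.2)
          (mem_pairSet.mpr ⟨hu, hsne, hw'⟩))
    · exact le_refl 1
  set Pi : ℕ → ℝ := fun i => ∏ j ∈ Finset.Ico i n, A j with hPidef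
  have hPi1 : ∀ i, 1 ≤ Pi i := by
    intro i
    rw [hPidef]
    calc (1:ℝ) = ∏ _j ∈ Finset.Ico i n, 1 := by simp
      _ ≤ ∏ j ∈ Finset.Ico i n, A j :=
        Finset.prod_le_prod (fun j _ => zero_le_one) (fun j _ => hA1 j)
  have hPi2 : ∀ (i : ℕ) (u w : Finset V), u ∈ T.levelSet B v i → T.succs u ≠ ∅ →
      w ∈ T.hyper B u → alpha1 T c r u w * Pi (i + 1) ≤ Pi i := by
    intro i u w hu hsne hw
    have hi : i < n := lt_forestHeight hB hv hu hsne
    have hsplit : Pi i = A i * Pi (i + 1) := by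
      rw [hPidef]
      exact Finset.prod_eq_prod_Ico_succ_bot hi A
    have halpha : alpha1 T c r u w ≤ A i := by
      rw [hA]
      dsimp only
      rw [dif_pos hi]
      exact Finset.le_sup' (fun p : Finset V × Finset V => alpha1 T c r p.1 p.2)
        (mem_pairSet.mpr ⟨hu, hsne, hw⟩)
    have hPp : (0:ℝ) ≤ Pi (i + 1) := zero_le_one.trans (hPi1 _)
    rw [hsplit]
    exact mul_le_mul_of_nonneg_right halpha hPp
  have hv0 : v ∈ T.levelSet B v 0 := by
    rw [levelSet]
    exact Finset.mem_singleton_self v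
  obtain ⟨hM1, hM2⟩ := sei_main hc hpos hB hr hv Pi hPi1 hPi2 (Fintype.card V) 0 v hv0
    (forestHeight_le_card v)
  have hm : (0:ℝ) < (v.card : ℝ) := by exact_mod_cast Finset.card_pos.mpr hv.1
  have hCost : (0:ℝ) < T.forestCost c v := forestCost_pos hpos hv.1
  have e1 : (fun y : ℝ => ((v.card : ℝ) * y) ^ 2)
      = fun y => ((v.card : ℝ) ^ 2) * y ^ 2 + 0 * y + 0 := by funext y; ring
  have e2 : (fun y : ℝ => (v.card : ℝ) * y)
      = fun y => (0:ℝ) * y ^ 2 + (v.card : ℝ) * y + 0 := by funext y; ring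
  rw [seiCV2, seiVar, e1, e2, seiE_quad hr hB, seiE_quad hr hB, hM1]
  set M2 := seiE T c B r (Fintype.card V) v (fun y => y ^ 2) with hM2def
  set Q := T.forestCost c v with hQ
  have hden : (0 * M2 + (v.card : ℝ) * (Q / (v.card : ℝ)) + 0) = Q := by
    linear_combination Q * (mul_inv_cancel₀ hm.ne')
  rw [hden]
  have hnum : ((v.card : ℝ) ^ 2 * M2 + 0 * (Q / (v.card : ℝ)) + 0)
      = (v.card : ℝ) ^ 2 * M2 := by ring
  rw [hnum]
  have hprod : (∏ i ∈ (Finset.range n).attach,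
        (T.pairSet B v i.1).sup' (hne i.1 (Finset.mem_range.mp i.2))
          fun p => alpha1 T c r p.1 p.2) = Pi 0 := by
    have h1 : ∀ i ∈ (Finset.range n).attach,
        ((T.pairSet B v i.1).sup' (hne i.1 (Finset.mem_range.mp i.2))
          fun p => alpha1 T c r p.1 p.2) = A i.1 := by
      intro i _
      rw [hA]
      dsimp only
      rw [dif_pos (Finset.mem_range.mp i.2)]
    rw [Finset.prod_congr rfl h1, Finset.prod_attach (Finset.range n) A, hPidef]
    dsimp only
    rw [Nat.Ico_zero_eq_range]
  rw [hprod]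
  have hkey : (v.card : ℝ) ^ 2 * M2 ≤ Pi 0 * Q ^ 2 := by
    have h1 := mul_le_mul_of_nonneg_left hM2 (sq_nonneg (v.card : ℝ))
    have h2 : (v.card : ℝ) ^ 2 * (Pi 0 * (Q / (v.card : ℝ)) ^ 2) = Pi 0 * Q ^ 2 := by
      linear_combination (Pi 0 * Q ^ 2) * (mul_inv_cancel₀ (pow_ne_zero 2 hm.ne'))
    linarith
  rw [div_le_iff₀ (by positivity), sub_mul, one_mul]
  nlinarith

end FinRootedTree
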